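/- Let r₀ > 0 and D > 0 satisfy λ(Q[r]) = D·r for all r ∈ [0, r₀], and let h be the probability measure on Q[r₀] given by dh(x) = (2 d(x)/(D r₀²)) dλ(x). Then for every expanding search S on Q such that x ↦ T(S,x) is λ-measurable, the expected normalized search time against h satisfies ∫_{Q[r₀]} (T(S,x)/d(x)) dh(x) ≥ D. -/

import Mathlib

open MeasureTheory Metric

/-- The (expanding) search time of the point `H` under the search `S`: the infimum of the
admissible times `t` (i.e. `0 ≤ t < λ(Q)`) with `H ∈ S t`, equal to `∞` if there is none. -/
noncomputable def searchTime {Q : Type*} [MetricSpace Q] [MeasurableSpace Q]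
    (μ : Measure Q) (S : ℝ → Set Q) (H : Q) : ENNReal :=
  ⨅ (t : ℝ) (_ : 0 ≤ t ∧ ENNReal.ofReal t < μ Set.univ ∧ H ∈ S t), ENNReal.ofReal t

/-- `S` is an expanding search on `Q` rooted at `O`: a family of measurable connected subsets
`S t` for `0 ≤ t < λ(Q)` with `S 0 = {O}`, nondecreasing in `t`, and `λ (S t) = t`. -/
def IsExpandingSearch {Q : Type*} [MetricSpace Q] [MeasurableSpace Q]
    (μ : Measure Q) (O : Q) (S : ℝ → Set Q) : Prop :=
  S 0 = {O} ∧
  (∀ t : ℝ, 0 ≤ t → ENNReal.ofReal t < μ Set.univ →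
    MeasurableSet (S t) ∧ IsConnected (S t) ∧ μ (S t) = ENNReal.ofReal t) ∧
  (∀ t t' : ℝ, 0 ≤ t → t ≤ t' → ENNReal.ofReal t' < μ Set.univ → S t ⊆ S t')

/-- If `λ(Q[r]) = D·r` for all `r ∈ [0, r₀]` (with `r₀, D > 0`), and `h` is the
probability measure on `Q[r₀]` with density `2 d(x)/(D r₀²)` with respect to `λ`, then every
expanding search `S` (with measurable search-time function) has expected normalized search time
against `h` at least `D`. -/
theorem degree_lower_bound
    {Q : Type*} [MetricSpace Q] [MeasurableSpace Q]
    (μ : Measure Q) (O : Q)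
    (r₀ D : ℝ) (hr₀ : 0 < r₀) (hD : 0 < D)
    (hlin : ∀ r : ℝ, 0 ≤ r → r ≤ r₀ → μ (closedBall O r) = ENNReal.ofReal (D * r))
    (S : ℝ → Set Q) (hS : IsExpandingSearch μ O S)
    (hmeas : Measurable (searchTime μ S)) :
    ENNReal.ofReal D ≤
      ∫⁻ x in closedBall O r₀, (searchTime μ S x / ENNReal.ofReal (dist O x)) *
        ENNReal.ofReal (2 * dist O x / (D * r₀ ^ 2)) ∂μ := by
  classical
  set T := searchTime μ S with hTdef
  set C := D * r₀ with hCdef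
  have hCpos : 0 < C := mul_pos hD hr₀
  set ν := μ.restrict (closedBall O r₀) with hνdef
  have hballQ : μ (closedBall O r₀) = ENNReal.ofReal C := hlin r₀ hr₀.le le_rfl
  have hνuniv : ν Set.univ = ENNReal.ofReal C := by
    rw [hνdef, Measure.restrict_apply_univ, hballQ]
  haveI : IsFiniteMeasure ν := ⟨by rw [hνuniv]; exact ENNReal.ofReal_lt_top⟩
  -- points with `T x ≤ t` are in `S t'` for `t < t' < C`
  have hsubset : ∀ t t' : ℝ, 0 ≤ t → t < t' → t' < C →
      {x | T x ≤ ENNReal.ofReal t} ⊆ S t' := by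
    intro t t' ht htt' ht'C x hx
    have ht'pos : 0 < t' := lt_of_le_of_lt ht htt'
    have hadm : ENNReal.ofReal t' < μ Set.univ :=
      lt_of_lt_of_le ((ENNReal.ofReal_lt_ofReal_iff_of_nonneg ht'pos.le).mpr ht'C)
        (hballQ ▸ measure_mono (Set.subset_univ _))
    have hlt : T x < ENNReal.ofReal t' :=
      lt_of_le_of_lt hx ((ENNReal.ofReal_lt_ofReal_iff_of_nonneg ht).mpr htt')
    rw [hTdef, searchTime] at hlt
    obtain ⟨s, hs⟩ := iInf_lt_iff.mp hlt
    obtain ⟨hPs, hslt⟩ := iInf_lt_iff.mp hs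
    have hst' : s < t' := (ENNReal.ofReal_lt_ofReal_iff_of_nonneg hPs.1).mp hslt
    exact hS.2.2 s t' hPs.1 hst'.le hadm hPs.2.2
  -- key bound on the distribution function
  have key : ∀ t : ℝ, 0 ≤ t → t < C →
      ν {x | T x ≤ ENNReal.ofReal t} ≤ ENNReal.ofReal t := by
    intro t ht htC
    apply ENNReal.le_of_forall_pos_le_add
    intro ε hε _
    set t' := min (t + ε) ((t + C) / 2) with ht'def
    have h1 : t < t' := lt_min (by exact lt_add_of_pos_right t (by exact_mod_cast hε))
      (by linarith)
    have h2 : t' < C := lt_of_le_of_lt (min_le_right _ _) (by linarith)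
    have hadm : ENNReal.ofReal t' < μ Set.univ :=
      lt_of_lt_of_le ((ENNReal.ofReal_lt_ofReal_iff_of_nonneg (le_trans ht h1.le)).mpr h2)
        (hballQ ▸ measure_mono (Set.subset_univ _))
    calc ν {x | T x ≤ ENNReal.ofReal t} ≤ ν (S t') := measure_mono (hsubset t t' ht h1 h2)
      _ ≤ μ (S t') := Measure.restrict_apply_le _ _
      _ = ENNReal.ofReal t' := (hS.2.1 t' (le_trans ht h1.le) hadm).2.2
      _ ≤ ENNReal.ofReal (t + ε) := ENNReal.ofReal_le_ofReal (min_le_left _ _)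
      _ ≤ ENNReal.ofReal t + ε := by
          rw [ENNReal.ofReal_add ht ε.coe_nonneg, ENNReal.ofReal_coe_nnreal]
  -- complement bound
  have hcompl : ∀ t : ℝ, t ∈ Set.Ioo (0:ℝ) C →
      ENNReal.ofReal (C - t) ≤ ν {x | ENNReal.ofReal t < T x} := by
    intro t ht
    have hms : MeasurableSet {x | T x ≤ ENNReal.ofReal t} := hmeas measurableSet_Iic
    have hset : {x | ENNReal.ofReal t < T x} = {x | T x ≤ ENNReal.ofReal t}ᶜ := by
      ext x; simp [not_le]
    rw [hset, measure_compl hms (measure_ne_top ν _), hνuniv,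
      ENNReal.ofReal_sub _ ht.1.le]
    exact tsub_le_tsub_left (key t ht.1.le ht.2) _
  -- layer-cake pointwise bound
  have hlayer : ∀ x : Q,
      (∫⁻ t in Set.Ioo 0 C, Set.indicator {t : ℝ | ENNReal.ofReal t < T x} 1 t) ≤ T x := by
    intro x
    have hmsx : MeasurableSet {t : ℝ | ENNReal.ofReal t < T x} :=
      measurableSet_lt ENNReal.measurable_ofReal measurable_const
    rw [lintegral_indicator_one hmsx, Measure.restrict_apply hmsx]
    by_cases hx : T x = ⊤
    · rw [hx]; exact le_top
    · calc volume ({t : ℝ | ENNReal.ofReal t < T x} ∩ Set.Ioo 0 C)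
          ≤ volume (Set.Ioo (0:ℝ) (T x).toReal) := by
            apply measure_mono
            rintro t ⟨h1, h2, _⟩
            exact ⟨h2, (ENNReal.ofReal_lt_iff_lt_toReal h2.le hx).mp h1⟩
        _ = ENNReal.ofReal ((T x).toReal - 0) := Real.volume_Ioo
        _ ≤ T x := by rw [sub_zero, ENNReal.ofReal_toReal hx]
  -- measurability of the double integrand
  have hprodms : MeasurableSet {p : Q × ℝ | ENNReal.ofReal p.2 < T p.1} :=
    measurableSet_lt (ENNReal.measurable_ofReal.comp measurable_snd)
      (hmeas.comp measurable_fst)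
  have hswap :
      (∫⁻ x, ∫⁻ t in Set.Ioo 0 C,
          Set.indicator {t : ℝ | ENNReal.ofReal t < T x} 1 t ∂volume ∂ν)
        = ∫⁻ t in Set.Ioo 0 C, ν {x | ENNReal.ofReal t < T x} ∂volume := by
    rw [lintegral_lintegral_swap (f := fun x t =>
      Set.indicator {t : ℝ | ENNReal.ofReal t < T x} 1 t)
      (Measurable.aemeasurable (by
        have : (Function.uncurry fun x t =>
            Set.indicator {t : ℝ | ENNReal.ofReal t < T x} (1 : ℝ → ENNReal) t) =
            Set.indicator {p : Q × ℝ | ENNReal.ofReal p.2 < T p.1} 1 := by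
          funext p
          by_cases hp : ENNReal.ofReal p.2 < T p.1 <;>
            simp [Function.uncurry, Set.indicator_apply, hp]
        rw [this]
        exact measurable_const.indicator hprodms))]
    refine lintegral_congr fun t => ?_
    have hmst : MeasurableSet {x : Q | ENNReal.ofReal t < T x} :=
      measurableSet_lt measurable_const hmeas
    rw [← lintegral_indicator_one (μ := ν) hmst]
    refine lintegral_congr fun x => ?_
    by_cases hx : ENNReal.ofReal t < T x <;> simp [Set.indicator_apply, hx]
  -- the area under the distribution function
  have hcalc : (∫⁻ t in Set.Ioo 0 C, ENNReal.ofReal (C - t) ∂volume)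
      = ENNReal.ofReal (C ^ 2 / 2) := by
    have hint : IntegrableOn (fun t : ℝ => C - t) (Set.Ioo 0 C) volume :=
      ((continuous_const.sub continuous_id).integrableOn_Icc).mono_set Set.Ioo_subset_Icc_self
    have hnn : 0 ≤ᵐ[volume.restrict (Set.Ioo 0 C)] fun t : ℝ => C - t :=
      (ae_restrict_iff' measurableSet_Ioo).mpr (ae_of_all _ fun t ht => by
        simp only [Pi.zero_apply]; linarith [ht.2])
    rw [← ofReal_integral_eq_lintegral_ofReal hint hnn]
    congr 1
    rw [← MeasureTheory.integral_Ioc_eq_integral_Ioo,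
      ← intervalIntegral.integral_of_le hCpos.le,
      intervalIntegral.integral_sub intervalIntegrable_const intervalIntegral.intervalIntegrable_id,
      intervalIntegral.integral_const, integral_id]
    simp; ring
  -- main lower bound on ∫ T dν
  have main : ENNReal.ofReal (C ^ 2 / 2) ≤ ∫⁻ x, T x ∂ν := by
    calc ENNReal.ofReal (C ^ 2 / 2)
        = ∫⁻ t in Set.Ioo 0 C, ENNReal.ofReal (C - t) ∂volume := hcalc.symm
      _ ≤ ∫⁻ t in Set.Ioo 0 C, ν {x | ENNReal.ofReal t < T x} ∂volume :=
          setLIntegral_mono' measurableSet_Ioo hcompl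
      _ = ∫⁻ x, ∫⁻ t in Set.Ioo 0 C,
            Set.indicator {t : ℝ | ENNReal.ofReal t < T x} 1 t ∂volume ∂ν := hswap.symm
      _ ≤ ∫⁻ x, T x ∂ν := lintegral_mono hlayer
  -- a.e. identification of the integrand
  have hnull : μ {x | dist O x = 0} = 0 := by
    have hsub : {x | dist O x = 0} ⊆ closedBall O 0 := by
      intro x hx
      simp only [mem_closedBall]
      rw [dist_comm]; exact le_of_eq hx
    refine le_antisymm (le_trans (measure_mono hsub) ?_) zero_le
    rw [hlin 0 le_rfl hr₀.le]
    simp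
  have hae : ∀ᵐ x ∂ν,
      (T x / ENNReal.ofReal (dist O x)) * ENNReal.ofReal (2 * dist O x / (D * r₀ ^ 2))
        = ENNReal.ofReal (2 / (D * r₀ ^ 2)) * T x := by
    have h0 : ∀ᵐ x ∂μ, dist O x ≠ 0 := by
      rw [ae_iff]; simpa using hnull
    filter_upwards [ae_restrict_of_ae h0] with x hx
    have hd : 0 < dist O x := lt_of_le_of_ne dist_nonneg (Ne.symm hx)
    have h2 : 2 * dist O x / (D * r₀ ^ 2) = dist O x * (2 / (D * r₀ ^ 2)) := by ring
    rw [h2, ENNReal.ofReal_mul hd.le, ← mul_assoc,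
      ENNReal.div_mul_cancel (by simpa using hd.ne') ENNReal.ofReal_ne_top, mul_comm]
  calc ENNReal.ofReal D
      = ENNReal.ofReal (2 / (D * r₀ ^ 2)) * ENNReal.ofReal (C ^ 2 / 2) := by
        rw [← ENNReal.ofReal_mul (by positivity)]
        congr 1
        rw [hCdef]
        field_simp
    _ ≤ ENNReal.ofReal (2 / (D * r₀ ^ 2)) * ∫⁻ x, T x ∂ν := mul_le_mul_right main _
    _ = ∫⁻ x, ENNReal.ofReal (2 / (D * r₀ ^ 2)) * T x ∂ν :=
        (lintegral_const_mul _ hmeas).symm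
    _ = ∫⁻ x, (T x / ENNReal.ofReal (dist O x)) *
          ENNReal.ofReal (2 * dist O x / (D * r₀ ^ 2)) ∂ν :=
        (lintegral_congr_ae hae).symm
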